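/- Let φ ∈ (0,π), λ = (2cos φ − 2)³, and g₁(t) = (t²−2t+1)³ − λt³. Then the zeros of the polynomial h₁(x) obtained by the substitution x = (t+1/t)/2 (i.e. the half-sums α = (ξ+1/ξ)/2 over zeros ξ of g₁) are exactly α₁ = cos φ, α₂ = 1+(cos φ−1)e^{2πi/3}, α₃ = 1+(cos φ−1)e^{−2πi/3}, and these three values are pairwise distinct. -/
import Mathlib

open Real Set

lemma aux_exists (c u : ℂ) (hu : u ^ 3 = 1) :
    ∃ t : ℂ, t ≠ 0 ∧ (t ^ 2 - 2 * t + 1) ^ 3 - (2 * c - 2) ^ 3 * t ^ 3 = 0 ∧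
      1 + (c - 1) * u = (t + 1 / t) / 2 := by
  obtain ⟨s, hs⟩ := IsAlgClosed.exists_pow_nat_eq ((1 + (c - 1) * u) ^ 2 - 1) (n := 2)
    (by norm_num)
  set x : ℂ := 1 + (c - 1) * u with hxdef
  have ht0 : x + s ≠ 0 := by
    intro h
    have h1 : (x + s) * (x - s) = 1 := by linear_combination -hs
    rw [h, zero_mul] at h1
    exact zero_ne_one h1
  refine ⟨x + s, ht0, ?_, ?_⟩
  · have h2 : (x + s) ^ 2 + 1 = 2 * x * (x + s) := by linear_combination hs
    linear_combination (((x+s)^2-2*(x+s)+1)^2 + ((x+s)^2-2*(x+s)+1)*((2*c-2)*u*(x+s))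
      + ((2*c-2)*u*(x+s))^2) * (by linear_combination h2 + 2*(x+s)*hxdef :
        ((x+s)^2 - 2*(x+s) + 1 : ℂ) = (2*c-2)*u*(x+s)) + (2*c-2)^3*(x+s)^3 * hu
  · have hinv : 1 / (x + s) = x - s := by
      rw [div_eq_iff ht0]
      linear_combination hs
    rw [hinv]
    ring

theorem roots_of_h1 (φ : ℝ) (hφ : φ ∈ Ioo (0 : ℝ) π) :
    {x : ℂ | ∃ t : ℂ, t ≠ 0 ∧
        (t ^ 2 - 2 * t + 1) ^ 3 - ((2 * Real.cos φ - 2 : ℝ) : ℂ) ^ 3 * t ^ 3 = 0 ∧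
        x = (t + 1 / t) / 2} =
      {(Real.cos φ : ℂ),
        1 + ((Real.cos φ : ℂ) - 1) * Complex.exp (2 * Real.pi * Complex.I / 3),
        1 + ((Real.cos φ : ℂ) - 1) * Complex.exp (-(2 * Real.pi * Complex.I) / 3)} ∧
    ((Real.cos φ : ℂ) ≠
        1 + ((Real.cos φ : ℂ) - 1) * Complex.exp (2 * Real.pi * Complex.I / 3)) ∧
    ((Real.cos φ : ℂ) ≠
        1 + ((Real.cos φ : ℂ) - 1) * Complex.exp (-(2 * Real.pi * Complex.I) / 3)) ∧
    (1 + ((Real.cos φ : ℂ) - 1) * Complex.exp (2 * Real.pi * Complex.I / 3) ≠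
        1 + ((Real.cos φ : ℂ) - 1) * Complex.exp (-(2 * Real.pi * Complex.I) / 3)) := by
  obtain ⟨hφ0, hφπ⟩ := hφ
  set c : ℂ := (Real.cos φ : ℂ) with hc
  set ω : ℂ := Complex.exp (2 * Real.pi * Complex.I / 3) with hω
  set ω' : ℂ := Complex.exp (-(2 * Real.pi * Complex.I) / 3) with hω'
  -- basic facts about ω, ω'
  have hωarg : (2 * (Real.pi : ℂ) * Complex.I / 3) = ((2 * π / 3 : ℝ) : ℂ) * Complex.I := by
    push_cast; ring
  have hω'arg : (-(2 * (Real.pi : ℂ) * Complex.I) / 3) = ((-(2 * π / 3) : ℝ) : ℂ) * Complex.I := by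
    push_cast; ring
  have hsin : Real.sin (2 * π / 3) > 0 := by
    apply Real.sin_pos_of_pos_of_lt_pi <;> [positivity; linarith [Real.pi_pos]]
  have hωim : ω.im = Real.sin (2 * π / 3) := by
    rw [hω, hωarg, Complex.exp_ofReal_mul_I_im]
  have hω'im : ω'.im = -Real.sin (2 * π / 3) := by
    rw [hω', hω'arg, Complex.exp_ofReal_mul_I_im, Real.sin_neg]
  have hωne1 : ω ≠ 1 := by
    intro h
    rw [h] at hωim
    simp [Complex.one_im] at hωim
    linarith
  have hω'ne1 : ω' ≠ 1 := by
    intro h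
    rw [h] at hω'im
    simp [Complex.one_im] at hω'im
    linarith
  have hωneω' : ω ≠ ω' := by
    intro h
    rw [h, hω'im] at hωim
    linarith
  have hω3 : ω ^ 3 = 1 := by
    rw [hω, ← Complex.exp_nat_mul]
    rw [show ((3 : ℕ) : ℂ) * (2 * (Real.pi : ℂ) * Complex.I / 3) = 2 * π * Complex.I by
      push_cast; ring]
    exact Complex.exp_two_pi_mul_I
  have hω'3 : ω' ^ 3 = 1 := by
    rw [hω', ← Complex.exp_nat_mul]
    rw [show ((3 : ℕ) : ℂ) * (-(2 * (Real.pi : ℂ) * Complex.I) / 3) = -(2 * π * Complex.I) by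
      push_cast; ring]
    rw [Complex.exp_neg, Complex.exp_two_pi_mul_I, inv_one]
  have hprod : ω * ω' = 1 := by
    rw [hω, hω', ← Complex.exp_add]
    rw [show (2 * (Real.pi : ℂ) * Complex.I / 3) + (-(2 * (Real.pi : ℂ) * Complex.I) / 3) = 0 by
      ring]
    exact Complex.exp_zero
  have hquad : ω ^ 2 + ω + 1 = 0 := by
    have h : (ω - 1) * (ω ^ 2 + ω + 1) = 0 := by linear_combination hω3
    rcases mul_eq_zero.1 h with h | h
    · exact absurd (by linear_combination h) hωne1
    · exact h
  have hsum : ω + ω' = -1 := by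
    have hω'eq : ω' = ω ^ 2 := by linear_combination ω ^ 2 * hprod - ω' * hω3
    rw [hω'eq]; linear_combination hquad
  -- c ≠ 1
  have hcos1 : Real.cos φ < 1 := by
    have := Real.cos_lt_cos_of_nonneg_of_le_pi le_rfl hφπ.le hφ0
    simpa using this
  have hc1 : c - 1 ≠ 0 := by
    rw [hc]
    intro h
    have : (Real.cos φ : ℂ) = 1 := by linear_combination h
    rw [show (1 : ℂ) = ((1 : ℝ) : ℂ) by norm_num, Complex.ofReal_inj] at this
    linarith
  have hcast : ((2 * Real.cos φ - 2 : ℝ) : ℂ) = 2 * c - 2 := by rw [hc]; norm_cast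
  refine ⟨?_, ?_, ?_, ?_⟩
  · ext x
    simp only [Set.mem_setOf_eq, Set.mem_insert_iff, Set.mem_singleton_iff]
    constructor
    · rintro ⟨t, ht0, heq, hx⟩
      rw [hcast] at heq
      have hfac : (t ^ 2 - 2 * t + 1 - (2 * c - 2) * t) *
          ((t ^ 2 - 2 * t + 1 - ω * ((2 * c - 2) * t)) *
           (t ^ 2 - 2 * t + 1 - ω' * ((2 * c - 2) * t))) = 0 := by
        linear_combination heq +
          ((t ^ 2 - 2 * t + 1) * ((2 * c - 2) * t) ^ 2 -
            (t ^ 2 - 2 * t + 1) ^ 2 * ((2 * c - 2) * t)) * hsum +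
          ((t ^ 2 - 2 * t + 1) * ((2 * c - 2) * t) ^ 2 - ((2 * c - 2) * t) ^ 3) * hprod
      have hdiv : ∀ K : ℂ, t ^ 2 - 2 * t + 1 - K * ((2 * c - 2) * t) = 0 →
          x = 1 + (c - 1) * K := by
        intro K hK
        rw [hx]
        field_simp
        linear_combination hK
      rcases mul_eq_zero.1 hfac with h | h
      · left
        have := hdiv 1 (by linear_combination h)
        rw [this]; ring
      · rcases mul_eq_zero.1 h with h | h
        · right; left; exact hdiv ω h
        · right; right; exact hdiv ω' h
    · rintro (rfl | rfl | rfl)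
      · obtain ⟨t, ht0, heq, hxeq⟩ := aux_exists c 1 (one_pow 3)
        exact ⟨t, ht0, by rw [hcast]; exact heq, by rw [← hxeq]; ring⟩
      · obtain ⟨t, ht0, heq, hxeq⟩ := aux_exists c ω hω3
        exact ⟨t, ht0, by rw [hcast]; exact heq, hxeq⟩
      · obtain ⟨t, ht0, heq, hxeq⟩ := aux_exists c ω' hω'3
        exact ⟨t, ht0, by rw [hcast]; exact heq, hxeq⟩
  · intro h
    have h2 : (c - 1) * (1 - ω) = 0 := by linear_combination h
    rcases mul_eq_zero.1 h2 with h3 | h3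
    · exact hc1 h3
    · exact hωne1 (by linear_combination -h3)
  · intro h
    have h2 : (c - 1) * (1 - ω') = 0 := by linear_combination h
    rcases mul_eq_zero.1 h2 with h3 | h3
    · exact hc1 h3
    · exact hω'ne1 (by linear_combination -h3)
  · intro h
    have h2 : (c - 1) * (ω - ω') = 0 := by linear_combination h
    rcases mul_eq_zero.1 h2 with h3 | h3
    · exact hc1 h3
    · exact hωneω' (by linear_combination h3)
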